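/- Let W > δ, let S be any schedule, and let (M*, α*) be a configuration such that for every configuration (M, α) one has f_S((M, α))/(α + δ) ≤ f_S((M*, α*))/(α* + δ). Then for every schedule O that is feasible for window W − δ, f_S((M*, α*)) ≥ ((α* + δ)/(W − δ))·(f(O) − f(S)). -/

import Mathlib

open Finset

noncomputable section
open scoped Classical

/-- A matching in the complete bipartite graph on `A × B`: no two distinct edges
share a first coordinate or a second coordinate. -/
def IsMatching {A B : Type*} (M : Finset (A × B)) : Prop :=
  ∀ e ∈ M, ∀ e' ∈ M, e ≠ e' → e.1 ≠ e'.1 ∧ e.2 ≠ e'.2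

/-- The data sent by a schedule `S` (a finite set of configurations `(M, α)`)
for a demand matrix `D`: `f(S) = Σ_e min(D_e, Σ_{(M,α)∈S, e∈M} α)`. -/
def sentData {A B : Type*} [Fintype A] [Fintype B] (D : A × B → ℝ)
    (S : Finset (Finset (A × B) × ℝ)) : ℝ :=
  ∑ e : A × B, min (D e) (∑ c ∈ S.filter (fun c => e ∈ c.1), c.2)

/-- The total time of a schedule: `Σ_{(M,α)∈S} (α + δ)`. -/
def totalTime {A B : Type*} (δ : ℝ) (S : Finset (Finset (A × B) × ℝ)) : ℝ :=
  ∑ c ∈ S, (c.2 + δ)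

/-- A valid schedule: every element is a configuration, i.e. a matching together
with a nonnegative duration. -/
def ValidSchedule {A B : Type*} (S : Finset (Finset (A × B) × ℝ)) : Prop :=
  ∀ c ∈ S, IsMatching c.1 ∧ 0 ≤ c.2

/-- The marginal gain `f_S((M, α)) = f(S ∪ {(M, α)}) − f(S)` of a configuration
with respect to a schedule `S`. -/
def gain {A B : Type*} [Fintype A] [Fintype B] (D : A × B → ℝ)
    (S : Finset (Finset (A × B) × ℝ)) (c : Finset (A × B) × ℝ) : ℝ :=
  sentData D (insert c S) - sentData D S

private lemma min_concave {d a b x : ℝ} (hab : a ≤ b) (hx : 0 ≤ x) :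
    min d (b + x) - min d b ≤ min d (a + x) - min d a := by
  rw [min_def, min_def, min_def, min_def]
  split_ifs <;> linarith

private lemma load_mono {A B : Type*} {S T : Finset (Finset (A × B) × ℝ)}
    (hST : S ⊆ T) (hT : ∀ c ∈ T, 0 ≤ c.2) (e : A × B) :
    ∑ c ∈ S.filter (fun c => e ∈ c.1), c.2 ≤ ∑ c ∈ T.filter (fun c => e ∈ c.1), c.2 :=
  Finset.sum_le_sum_of_subset_of_nonneg (Finset.filter_subset_filter _ hST)
    (fun c hc _ => hT c (Finset.mem_filter.mp hc).1)

private lemma sentData_mono {A B : Type*} [Fintype A] [Fintype B] (D : A × B → ℝ)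
    {S T : Finset (Finset (A × B) × ℝ)} (hST : S ⊆ T) (hT : ∀ c ∈ T, 0 ≤ c.2) :
    sentData D S ≤ sentData D T := by
  refine Finset.sum_le_sum fun e _ => ?_
  exact min_le_min le_rfl (load_mono hST hT e)

private lemma gain_submodular {A B : Type*} [Fintype A] [Fintype B] (D : A × B → ℝ)
    {S T : Finset (Finset (A × B) × ℝ)} (hST : S ⊆ T) (hT : ∀ c ∈ T, 0 ≤ c.2)
    (c : Finset (A × B) × ℝ) (hc : 0 ≤ c.2) :
    sentData D (insert c T) - sentData D T ≤ gain D S c := by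
  have hSnn : ∀ d ∈ S, 0 ≤ d.2 := fun d hd => hT d (hST hd)
  by_cases hcT : c ∈ T
  · rw [Finset.insert_eq_self.mpr hcT, sub_self]
    have : sentData D S ≤ sentData D (insert c S) := by
      refine sentData_mono D (Finset.subset_insert _ _) ?_
      intro d hd
      rcases Finset.mem_insert.mp hd with rfl | hd
      · exact hc
      · exact hSnn d hd
    unfold gain; linarith
  · have hcS : c ∉ S := fun h => hcT (hST h)
    unfold gain sentData
    rw [← Finset.sum_sub_distrib, ← Finset.sum_sub_distrib]
    refine Finset.sum_le_sum fun e _ => ?_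
    by_cases he : e ∈ c.1
    · rw [Finset.filter_insert, Finset.filter_insert, if_pos he, if_pos he,
        Finset.sum_insert (fun h => hcT (Finset.mem_filter.mp h).1),
        Finset.sum_insert (fun h => hcS (Finset.mem_filter.mp h).1),
        add_comm c.2, add_comm c.2]
      exact min_concave (load_mono hST hT e) hc
    · rw [Finset.filter_insert, Finset.filter_insert, if_neg he, if_neg he,
        sub_self, sub_self]

private lemma telescope_gain {A B : Type*} [Fintype A] [Fintype B] (D : A × B → ℝ)
    (S : Finset (Finset (A × B) × ℝ)) (hS : ∀ c ∈ S, 0 ≤ c.2) :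
    ∀ O : Finset (Finset (A × B) × ℝ), (∀ c ∈ O, 0 ≤ c.2) →
      sentData D (S ∪ O) - sentData D S ≤ ∑ c ∈ O, gain D S c := by
  intro O
  induction O using Finset.induction_on with
  | empty => intro _; simp
  | @insert c O' hcO' ih =>
    intro hO
    have hO' : ∀ d ∈ O', 0 ≤ d.2 := fun d hd => hO d (Finset.mem_insert_of_mem hd)
    have hU : ∀ d ∈ S ∪ O', 0 ≤ d.2 := by
      intro d hd; rcases Finset.mem_union.mp hd with h | h
      · exact hS d h
      · exact hO' d h
    have h1 : sentData D (insert c (S ∪ O')) - sentData D (S ∪ O') ≤ gain D S c :=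
      gain_submodular D Finset.subset_union_left hU c (hO c (Finset.mem_insert_self _ _))
    have h2 := ih hO'
    rw [Finset.union_insert]
    rw [Finset.sum_insert hcO']
    linarith

/-- If `(M*, α*)` maximizes marginal gain per unit time with respect to `S`, then for
every schedule `O` feasible for window `W − δ`,
`f_S((M*, α*)) ≥ ((α* + δ)/(W − δ)) · (f(O) − f(S))`. -/
theorem greedy_step_gain {A B : Type*} [Fintype A] [Fintype B]
    (D : A × B → ℝ) (hD : ∀ e, 0 ≤ D e) (δ W : ℝ) (hδ : 0 < δ) (hW : δ < W)
    (S : Finset (Finset (A × B) × ℝ)) (hS : ValidSchedule S)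
    (Mstar : Finset (A × B)) (αstar : ℝ) (hMstar : IsMatching Mstar) (hαstar : 0 ≤ αstar)
    (hbest : ∀ (M : Finset (A × B)) (α : ℝ), IsMatching M → 0 ≤ α →
      gain D S (M, α) / (α + δ) ≤ gain D S (Mstar, αstar) / (αstar + δ)) :
    ∀ O : Finset (Finset (A × B) × ℝ), ValidSchedule O → totalTime δ O ≤ W - δ →
      gain D S (Mstar, αstar) ≥ ((αstar + δ) / (W - δ)) * (sentData D O - sentData D S) := by
  intro O hO hOtime
  have hSnn : ∀ c ∈ S, 0 ≤ c.2 := fun c hc => (hS c hc).2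
  have hOnn : ∀ c ∈ O, 0 ≤ c.2 := fun c hc => (hO c hc).2
  have hp : (0:ℝ) < αstar + δ := by linarith
  have hw : (0:ℝ) < W - δ := by linarith
  set g := gain D S (Mstar, αstar) with hg
  -- g ≥ 0
  have hg0 : 0 ≤ g := by
    have hempty : IsMatching (∅ : Finset (A × B)) := by
      intro e he; simp at he
    have h := hbest ∅ 0 hempty le_rfl
    have hz : gain D S ((∅ : Finset (A × B)), (0:ℝ)) = 0 := by
      simp [gain, sentData, Finset.filter_insert]
    rw [hz, zero_add, zero_div] at h
    have := mul_nonneg h hp.le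
    rwa [div_mul_cancel₀ _ hp.ne'] at this
  -- each gain bounded
  have hgain : ∀ c ∈ O, gain D S c ≤ (c.2 + δ) * (g / (αstar + δ)) := by
    intro c hc
    have h := hbest c.1 c.2 (hO c hc).1 (hO c hc).2
    have hcd : (0:ℝ) < c.2 + δ := by have := hOnn c hc; linarith
    rw [Prod.mk.eta] at h
    rw [div_le_div_iff₀ hcd hp] at h
    rw [← mul_div_assoc, le_div_iff₀ hp]
    linear_combination h
  -- key chain
  have hUnn : ∀ c ∈ S ∪ O, 0 ≤ c.2 := by
    intro c hc; rcases Finset.mem_union.mp hc with h | h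
    · exact hSnn c h
    · exact hOnn c h
  have h1 : sentData D O ≤ sentData D (S ∪ O) :=
    sentData_mono D Finset.subset_union_right hUnn
  have h2 : sentData D (S ∪ O) - sentData D S ≤ ∑ c ∈ O, gain D S c :=
    telescope_gain D S hSnn O hOnn
  have h3 : ∑ c ∈ O, gain D S c ≤ ∑ c ∈ O, (c.2 + δ) * (g / (αstar + δ)) :=
    Finset.sum_le_sum hgain
  have h4 : ∑ c ∈ O, (c.2 + δ) * (g / (αstar + δ)) = totalTime δ O * (g / (αstar + δ)) := by
    rw [totalTime, Finset.sum_mul]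
  have h5 : totalTime δ O * (g / (αstar + δ)) ≤ (W - δ) * (g / (αstar + δ)) :=
    mul_le_mul_of_nonneg_right hOtime (div_nonneg hg0 hp.le)
  have key : sentData D O - sentData D S ≤ (W - δ) * (g / (αstar + δ)) := by
    calc sentData D O - sentData D S ≤ sentData D (S ∪ O) - sentData D S := by linarith
    _ ≤ ∑ c ∈ O, gain D S c := h2
    _ ≤ (W - δ) * (g / (αstar + δ)) := by linarith
  have hfac : (0:ℝ) ≤ (αstar + δ) / (W - δ) := div_nonneg hp.le hw.le
  have := mul_le_mul_of_nonneg_left key hfac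
  have heq : ((αstar + δ) / (W - δ)) * ((W - δ) * (g / (αstar + δ))) = g := by
    field_simp
  rw [heq] at this
  exact this
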